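/- Let 0 < β < 1, σ > 0 with σ ≠ 1, γ > 0, π ≥ 0, δ* > 0, ρ > 0, c₁ > 0, and suppose ρ < δ* < ρ + δ*σ. Set z̄ := ((δ*+π)/(βγ))^{1/(1−β)}, ū := (ρ + δ*(σ−1))/(δ*σ), ξ := (δ* + π(1−β))/β − (δ*−ρ)/σ, g := (δ*−ρ)/σ, c₀ := ((1−β)γ/(c₁·δ*·z̄^β))^{1/σ}, k₀ := c₀/ξ, h₀ := z̄·k₀/ū. Define c(t) = c₀e^{g t}, k(t) = k₀e^{g t}, u(t) = ū, h*(t) = h₀e^{g t}, λ(t) = c₀^{−σ}e^{(ρ−δ*)t}, μ*(t) = c₁e^{(ρ−δ*)t}. Then these functions satisfy, for all t: (T1) λ = c^{−σ}; (T2) (h*·u/k)^β = (γ(1−β)/δ*)·(λ/μ*); (T3) k' = γ·k^β·(u·h*)^{1−β} − πk − c; (T4) (h*)' = δ*(1−u)h*; (T5) λ' = −λ·βγ·(h*·u/k)^{1−β} + λ(ρ+π); (T6) (μ*)' = μ*(ρ−δ*); moreover e^{−ρt}λ(t)k(t) → 0 and e^{−ρt}μ*(t)h*(t) → 0 as t →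 ∞. -/

import Mathlib

open Filter

/-- The first closed-form (balanced-growth-path) solution of the transformed
Lucas-Uzawa model satisfies the first-order conditions (T1)-(T6) and the
transversality conditions. -/
theorem first_solution_verifies (β σ γ pi δs ρ c1 : ℝ)
    (hβ0 : 0 < β) (hβ1 : β < 1) (hσ : 0 < σ) (hσ1 : σ ≠ 1) (hγ : 0 < γ)
    (hpi : 0 ≤ pi) (hδs : 0 < δs) (hρ : 0 < ρ) (hc1 : 0 < c1)
    (hρδ : ρ < δs) (hδρ : δs < ρ + δs * σ)
    (zbar ubar ξ g c0 k0 h0 : ℝ)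
    (hzbar : zbar = ((δs + pi) / (β * γ)) ^ (1 / (1 - β)))
    (hubar : ubar = (ρ + δs * (σ - 1)) / (δs * σ))
    (hξ : ξ = (δs + pi * (1 - β)) / β - (δs - ρ) / σ)
    (hg : g = (δs - ρ) / σ)
    (hc0 : c0 = ((1 - β) * γ / (c1 * δs * zbar ^ β)) ^ (1 / σ))
    (hk0 : k0 = c0 / ξ)
    (hh0 : h0 = zbar * k0 / ubar)
    (c k u hs lam mus : ℝ → ℝ)
    (hc : ∀ t, c t = c0 * Real.exp (g * t))
    (hk : ∀ t, k t = k0 * Real.exp (g * t))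
    (hu : ∀ t, u t = ubar)
    (hhs : ∀ t, hs t = h0 * Real.exp (g * t))
    (hlam : ∀ t, lam t = c0 ^ (-σ) * Real.exp ((ρ - δs) * t))
    (hmus : ∀ t, mus t = c1 * Real.exp ((ρ - δs) * t)) :
    (∀ t, lam t = c t ^ (-σ)) ∧
    (∀ t, (hs t * u t / k t) ^ β = γ * (1 - β) / δs * (lam t / mus t)) ∧
    (∀ t, deriv k t = γ * k t ^ β * (u t * hs t) ^ (1 - β) - pi * k t - c t) ∧
    (∀ t, deriv hs t = δs * (1 - u t) * hs t) ∧
    (∀ t, deriv lam t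
      = -(lam t) * (β * γ) * (hs t * u t / k t) ^ (1 - β) + lam t * (ρ + pi)) ∧
    (∀ t, deriv mus t = mus t * (ρ - δs)) ∧
    Tendsto (fun t => Real.exp (-ρ * t) * lam t * k t) atTop (nhds 0) ∧
    Tendsto (fun t => Real.exp (-ρ * t) * mus t * hs t) atTop (nhds 0) := by
  have h1β : 0 < 1 - β := by linarith
  have hzb : 0 < zbar := by
    rw [hzbar]; exact Real.rpow_pos_of_pos (by positivity) _
  have hz1β : zbar ^ (1 - β) = (δs + pi) / (β * γ) := by
    rw [hzbar, ← Real.rpow_mul (by positivity), one_div,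
      inv_mul_cancel₀ h1β.ne', Real.rpow_one]
  have hg0 : 0 < g := hg ▸ div_pos (by linarith) hσ
  have hgδ : g < δs := by rw [hg, div_lt_iff₀ hσ]; nlinarith
  have hub0 : 0 < ubar := by
    rw [hubar]; exact div_pos (by nlinarith) (by positivity)
  have hξ0 : 0 < ξ := by
    rw [hξ, ← hg]
    have h2 : δs ≤ (δs + pi * (1 - β)) / β := by
      rw [le_div_iff₀ hβ0]; nlinarith
    linarith
  have hc0pos : 0 < c0 := by
    have : 0 < zbar ^ β := Real.rpow_pos_of_pos hzb β
    rw [hc0]; exact Real.rpow_pos_of_pos (by positivity) _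
  have hk0pos : 0 < k0 := hk0 ▸ div_pos hc0pos hξ0
  have hh0pos : 0 < h0 := hh0 ▸ div_pos (mul_pos hzb hk0pos) hub0
  have hzβ0 : (0:ℝ) < zbar ^ β := Real.rpow_pos_of_pos hzb β
  have hc0σ : c0 ^ σ = (1 - β) * γ / (c1 * δs * zbar ^ β) := by
    rw [hc0, ← Real.rpow_mul (by positivity), one_div, inv_mul_cancel₀ hσ.ne',
      Real.rpow_one]
  have key1 : ubar * h0 = zbar * k0 := by
    rw [hh0]; field_simp
  have key2 : β * γ * zbar ^ (1 - β) = δs + pi := by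
    rw [hz1β]; field_simp
  have key3 : g = δs * (1 - ubar) := by
    rw [hg, hubar]; field_simp; ring
  have key4 : c0 = k0 * ξ := by
    rw [hk0]; field_simp
  have hξ' : β * ξ = δs + pi * (1 - β) - β * g := by
    rw [hξ, ← hg]; field_simp
  -- derivative helper
  have hexp : ∀ a t : ℝ, HasDerivAt (fun t => Real.exp (a * t)) (a * Real.exp (a * t)) t := by
    intro a t
    simpa [mul_comm] using ((hasDerivAt_id t).const_mul a).exp
  have hD : ∀ A a t : ℝ, deriv (fun t => A * Real.exp (a * t)) t
      = a * (A * Real.exp (a * t)) := by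
    intro A a t
    rw [((hexp a t).const_mul A).deriv]; ring
  have hratio : ∀ t, hs t * u t / k t = zbar := by
    intro t
    rw [hhs, hu, hk, div_eq_iff (by positivity)]
    linear_combination Real.exp (g * t) * key1
  have hlim : ∀ C : ℝ, Tendsto (fun t : ℝ => C * Real.exp ((g - δs) * t)) atTop (nhds 0) := by
    intro C
    have h1 : Tendsto (fun t : ℝ => (g - δs) * t) atTop atBot :=
      tendsto_id.const_mul_atTop_of_neg (by linarith)
    have h3 : Tendsto (fun t : ℝ => Real.exp ((g - δs) * t)) atTop (nhds 0) :=
      Real.tendsto_exp_atBot.comp h1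
    simpa using h3.const_mul C
  refine ⟨?_, ?_, ?_, ?_, ?_, ?_, ?_, ?_⟩
  · -- (T1)
    intro t
    rw [hlam, hc, Real.mul_rpow hc0pos.le (Real.exp_pos _).le,
      Real.rpow_def_of_pos (Real.exp_pos _), Real.log_exp,
      show g * t * (-σ) = (ρ - δs) * t by rw [hg]; field_simp; ring]
  · -- (T2)
    intro t
    have hE : Real.exp ((ρ - δs) * t) ≠ 0 := (Real.exp_pos _).ne'
    rw [hratio t, hlam, hmus, Real.rpow_neg hc0pos.le, hc0σ]
    field_simp
  · -- (T3)
    intro t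
    set E := Real.exp (g * t) with hE
    have hEpos : 0 < E := Real.exp_pos _
    have hd : deriv k t = g * (k0 * E) := by rw [funext hk]; exact hD k0 g t
    rw [hd, hk, hu, hhs, hc,
      Real.mul_rpow hk0pos.le hEpos.le,
      show ubar * (h0 * E) = zbar * k0 * E by linear_combination E * key1,
      Real.mul_rpow (by positivity) hEpos.le, Real.mul_rpow hzb.le hk0pos.le]
    have e4 : E ^ β * E ^ (1 - β) = E := by
      rw [← Real.rpow_add hEpos]; norm_num
    have e5 : k0 ^ β * k0 ^ (1 - β) = k0 := by
      rw [← Real.rpow_add hk0pos]; norm_num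
    have e45 : (k0 ^ β * E ^ β) * (k0 ^ (1 - β) * E ^ (1 - β)) = k0 * E := by
      rw [mul_mul_mul_comm, e5, e4]
    have hco : β * (g * k0) = β * (γ * zbar ^ (1 - β) * k0 - pi * k0 - c0) := by
      linear_combination (-k0) * key2 + β * key4 + k0 * hξ'
    have hco' : g * k0 = γ * zbar ^ (1 - β) * k0 - pi * k0 - c0 :=
      mul_left_cancel₀ hβ0.ne' hco
    linear_combination (-(γ * zbar ^ (1 - β))) * e45 + E * hco'
  · -- (T4)
    intro t
    have hd : deriv hs t = g * (h0 * Real.exp (g * t)) := by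
      rw [funext hhs]; exact hD h0 g t
    rw [hd, hhs, hu, key3]
  · -- (T5)
    intro t
    have hd : deriv lam t = (ρ - δs) * (c0 ^ (-σ) * Real.exp ((ρ - δs) * t)) := by
      rw [funext hlam]; exact hD _ _ t
    rw [hd, hratio t, hlam]
    linear_combination (c0 ^ (-σ) * Real.exp ((ρ - δs) * t)) * key2
  · -- (T6)
    intro t
    have hd : deriv mus t = (ρ - δs) * (c1 * Real.exp ((ρ - δs) * t)) := by
      rw [funext hmus]; exact hD _ _ t
    rw [hd, hmus]; ring
  · -- transversality for λ k
    have e : (fun t => Real.exp (-ρ * t) * lam t * k t)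
        = fun t => (c0 ^ (-σ) * k0) * Real.exp ((g - δs) * t) := by
      funext t
      rw [hlam t, hk t, show (g - δs) * t = -ρ * t + ((ρ - δs) * t + g * t) by ring,
        Real.exp_add, Real.exp_add]
      ring
    rw [e]; exact hlim _
  · -- transversality for μ* h*
    have e : (fun t => Real.exp (-ρ * t) * mus t * hs t)
        = fun t => (c1 * h0) * Real.exp ((g - δs) * t) := by
      funext t
      rw [hmus t, hhs t, show (g - δs) * t = -ρ * t + ((ρ - δs) * t + g * t) by ring,
        Real.exp_add, Real.exp_add]
      ring
    rw [e]; exact hlim _
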